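/- For any finite-horizon MDP with transition kernels P_h and any two Markov policies π, π̃, the total variation distance between their occupancy measures satisfies ‖μ^π − μ^{π̃}‖₁ := Σ_{h=1}^H Σ_{s,a} |μ^π_h(s,a) − μ^{π̃}_h(s,a)| ≤ H · Σ_{h=1}^H Σ_s d^π_h(s) ‖π_h(·|s) − π̃_h(·|s)‖₁, where d^π_h(s) = Σ_a μ^π_h(s,a) is the state marginal of μ^π at step h. -/
import Mathlib


open Finset

def IsPolicy {S A : Type*} [Fintype A] (π : ℕ → S → A → ℝ) : Prop :=
  ∀ h s, (∀ a, 0 ≤ π h s a) ∧ ∑ a, π h s a = 1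

def IsKernel {S A : Type*} [Fintype S] (P : ℕ → S → A → S → ℝ) : Prop :=
  ∀ h s a, (∀ s', 0 ≤ P h s a s') ∧ ∑ s', P h s a s' = 1

def IsProb {S : Type*} [Fintype S] (μ₁ : S → ℝ) : Prop :=
  (∀ s, 0 ≤ μ₁ s) ∧ ∑ s, μ₁ s = 1

noncomputable def occ {S A : Type*} [Fintype S] [Fintype A] (μ₁ : S → ℝ)
    (P : ℕ → S → A → S → ℝ) (π : ℕ → S → A → ℝ) : ℕ → S → A → ℝ
  | 0 => fun s a => μ₁ s * π 0 s a
  | (h+1) => fun s a => π (h+1) s a * ∑ s', ∑ a', P h s' a' s * occ μ₁ P π h s' a'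

lemma occ_nonneg {S A : Type*} [Fintype S] [Fintype A] (μ₁ : S → ℝ) (hμ₁ : IsProb μ₁)
    (P : ℕ → S → A → S → ℝ) (hP : IsKernel P)
    (π : ℕ → S → A → ℝ) (hπ : IsPolicy π) : ∀ h s a, 0 ≤ occ μ₁ P π h s a := by
  intro h
  induction h with
  | zero => intro s a; exact mul_nonneg (hμ₁.1 s) ((hπ 0 s).1 a)
  | succ h ih =>
    intro s a
    refine mul_nonneg ((hπ (h+1) s).1 a) ?_
    refine Finset.sum_nonneg fun s' _ => Finset.sum_nonneg fun a' _ => ?_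
    exact mul_nonneg ((hP h s' a').1 s) (ih s' a')

lemma occ_marginal {S A : Type*} [Fintype S] [Fintype A] (μ₁ : S → ℝ)
    (P : ℕ → S → A → S → ℝ) (π : ℕ → S → A → ℝ) (hπ : IsPolicy π) (h : ℕ) (s : S) :
    ∑ a, occ μ₁ P π (h+1) s a = ∑ s', ∑ a', P h s' a' s * occ μ₁ P π h s' a' := by
  show ∑ a, π (h+1) s a * _ = _
  rw [← Finset.sum_mul, (hπ (h+1) s).2, one_mul]

lemma step_bound {S A : Type*} [Fintype S] [Fintype A] (μ₁ : S → ℝ) (hμ₁ : IsProb μ₁)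
    (P : ℕ → S → A → S → ℝ) (hP : IsKernel P)
    (π π' : ℕ → S → A → ℝ) (hπ : IsPolicy π) (hπ' : IsPolicy π') (h : ℕ) :
    ∑ s, ∑ a, |occ μ₁ P π (h+1) s a - occ μ₁ P π' (h+1) s a| ≤
      (∑ s, (∑ a, occ μ₁ P π (h+1) s a) * (∑ a, |π (h+1) s a - π' (h+1) s a|))
        + ∑ s, ∑ a, |occ μ₁ P π h s a - occ μ₁ P π' h s a| := by
  set T : S → ℝ := fun s => ∑ s', ∑ a', P h s' a' s * occ μ₁ P π h s' a' with hT
  set T' : S → ℝ := fun s => ∑ s', ∑ a', P h s' a' s * occ μ₁ P π' h s' a' with hT'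
  have hTnn : ∀ s, 0 ≤ T s := fun s =>
    Finset.sum_nonneg fun s' _ => Finset.sum_nonneg fun a' _ =>
      mul_nonneg ((hP h s' a').1 s) (occ_nonneg μ₁ hμ₁ P hP π hπ h s' a')
  have key : ∀ s, ∑ a, |occ μ₁ P π (h+1) s a - occ μ₁ P π' (h+1) s a| ≤
      T s * (∑ a, |π (h+1) s a - π' (h+1) s a|) + |T s - T' s| := by
    intro s
    have : ∀ a, |occ μ₁ P π (h+1) s a - occ μ₁ P π' (h+1) s a| ≤
        |π (h+1) s a - π' (h+1) s a| * T s + π' (h+1) s a * |T s - T' s| := by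
      intro a
      show |π (h+1) s a * T s - π' (h+1) s a * T' s| ≤ _
      have : π (h+1) s a * T s - π' (h+1) s a * T' s =
          (π (h+1) s a - π' (h+1) s a) * T s + π' (h+1) s a * (T s - T' s) := by ring
      rw [this]
      calc |(π (h+1) s a - π' (h+1) s a) * T s + π' (h+1) s a * (T s - T' s)|
          ≤ |(π (h+1) s a - π' (h+1) s a) * T s| + |π' (h+1) s a * (T s - T' s)| :=
            abs_add_le _ _
        _ = |π (h+1) s a - π' (h+1) s a| * T s + π' (h+1) s a * |T s - T' s| := by
            rw [abs_mul, abs_mul, abs_of_nonneg (hTnn s),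
              abs_of_nonneg ((hπ' (h+1) s).1 a)]
    calc ∑ a, |occ μ₁ P π (h+1) s a - occ μ₁ P π' (h+1) s a|
        ≤ ∑ a, (|π (h+1) s a - π' (h+1) s a| * T s + π' (h+1) s a * |T s - T' s|) :=
          Finset.sum_le_sum fun a _ => this a
      _ = T s * (∑ a, |π (h+1) s a - π' (h+1) s a|) + |T s - T' s| := by
          rw [Finset.sum_add_distrib, ← Finset.sum_mul, ← Finset.sum_mul,
            (hπ' (h+1) s).2, one_mul, mul_comm]
  have hTdiff : ∑ s, |T s - T' s| ≤ ∑ s, ∑ a, |occ μ₁ P π h s a - occ μ₁ P π' h s a| := by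
    have h1 : ∀ s, |T s - T' s| ≤
        ∑ s', ∑ a', P h s' a' s * |occ μ₁ P π h s' a' - occ μ₁ P π' h s' a'| := by
      intro s
      have : T s - T' s = ∑ s', ∑ a',
          P h s' a' s * (occ μ₁ P π h s' a' - occ μ₁ P π' h s' a') := by
        simp [hT, hT', ← Finset.sum_sub_distrib, mul_sub]
      rw [this]
      calc |∑ s', ∑ a', P h s' a' s * (occ μ₁ P π h s' a' - occ μ₁ P π' h s' a')|
          ≤ ∑ s', |∑ a', P h s' a' s * (occ μ₁ P π h s' a' - occ μ₁ P π' h s' a')| :=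
            Finset.abs_sum_le_sum_abs _ _
        _ ≤ ∑ s', ∑ a', |P h s' a' s * (occ μ₁ P π h s' a' - occ μ₁ P π' h s' a')| :=
            Finset.sum_le_sum fun s' _ => Finset.abs_sum_le_sum_abs _ _
        _ = ∑ s', ∑ a', P h s' a' s * |occ μ₁ P π h s' a' - occ μ₁ P π' h s' a'| := by
            refine Finset.sum_congr rfl fun s' _ => Finset.sum_congr rfl fun a' _ => ?_
            rw [abs_mul, abs_of_nonneg ((hP h s' a').1 s)]
    calc ∑ s, |T s - T' s|
        ≤ ∑ s, ∑ s', ∑ a', P h s' a' s * |occ μ₁ P π h s' a' - occ μ₁ P π' h s' a'| :=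
          Finset.sum_le_sum fun s _ => h1 s
      _ = ∑ s', ∑ a', (∑ s, P h s' a' s) * |occ μ₁ P π h s' a' - occ μ₁ P π' h s' a'| := by
          rw [Finset.sum_comm]
          refine Finset.sum_congr rfl fun s' _ => ?_
          rw [Finset.sum_comm]
          exact Finset.sum_congr rfl fun a' _ => by rw [Finset.sum_mul]
      _ = ∑ s', ∑ a', |occ μ₁ P π h s' a' - occ μ₁ P π' h s' a'| := by
          refine Finset.sum_congr rfl fun s' _ => Finset.sum_congr rfl fun a' _ => ?_
          rw [(hP h s' a').2, one_mul]
  calc ∑ s, ∑ a, |occ μ₁ P π (h+1) s a - occ μ₁ P π' (h+1) s a|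
      ≤ ∑ s, (T s * (∑ a, |π (h+1) s a - π' (h+1) s a|) + |T s - T' s|) :=
        Finset.sum_le_sum fun s _ => key s
    _ = (∑ s, T s * (∑ a, |π (h+1) s a - π' (h+1) s a|)) + ∑ s, |T s - T' s| :=
        Finset.sum_add_distrib
    _ ≤ _ := by
        refine add_le_add (le_of_eq ?_) hTdiff
        refine Finset.sum_congr rfl fun s _ => ?_
        rw [occ_marginal μ₁ P π hπ h s]

lemma delta_bound {S A : Type*} [Fintype S] [Fintype A] (μ₁ : S → ℝ) (hμ₁ : IsProb μ₁)
    (P : ℕ → S → A → S → ℝ) (hP : IsKernel P)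
    (π π' : ℕ → S → A → ℝ) (hπ : IsPolicy π) (hπ' : IsPolicy π') (h : ℕ) :
    ∑ s, ∑ a, |occ μ₁ P π h s a - occ μ₁ P π' h s a| ≤
      ∑ k ∈ Finset.range (h+1), ∑ s,
        (∑ a, occ μ₁ P π k s a) * (∑ a, |π k s a - π' k s a|) := by
  induction h with
  | zero =>
    rw [Finset.sum_range_one]
    refine Finset.sum_le_sum fun s _ => ?_
    show ∑ a, |μ₁ s * π 0 s a - μ₁ s * π' 0 s a| ≤ _
    have : ∑ a, |μ₁ s * π 0 s a - μ₁ s * π' 0 s a| = μ₁ s * ∑ a, |π 0 s a - π' 0 s a| := by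
      rw [Finset.mul_sum]
      refine Finset.sum_congr rfl fun a _ => ?_
      rw [← mul_sub, abs_mul, abs_of_nonneg (hμ₁.1 s)]
    rw [this]
    have hocc : ∑ a, occ μ₁ P π 0 s a = μ₁ s := by
      show ∑ a, μ₁ s * π 0 s a = μ₁ s
      rw [← Finset.mul_sum, (hπ 0 s).2, mul_one]
    rw [hocc]
  | succ h ih =>
    rw [Finset.sum_range_succ]
    calc ∑ s, ∑ a, |occ μ₁ P π (h+1) s a - occ μ₁ P π' (h+1) s a|
        ≤ (∑ s, (∑ a, occ μ₁ P π (h+1) s a) * (∑ a, |π (h+1) s a - π' (h+1) s a|))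
            + ∑ s, ∑ a, |occ μ₁ P π h s a - occ μ₁ P π' h s a| :=
          step_bound μ₁ hμ₁ P hP π π' hπ hπ' h
      _ ≤ _ := by rw [add_comm]; exact add_le_add ih le_rfl

/-- `‖μ^π − μ^π̃‖₁ ≤ H · Σ_h Σ_s d^π_h(s) ‖π_h(·|s) − π̃_h(·|s)‖₁`. -/
theorem stmt1 {S A : Type*} [Fintype S] [Fintype A]
    (H : ℕ) (μ₁ : S → ℝ) (hμ₁ : IsProb μ₁)
    (P : ℕ → S → A → S → ℝ) (hP : IsKernel P)
    (π π' : ℕ → S → A → ℝ) (hπ : IsPolicy π) (hπ' : IsPolicy π') :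
    ∑ h ∈ Finset.range H, ∑ s, ∑ a, |occ μ₁ P π h s a - occ μ₁ P π' h s a| ≤
      (H : ℝ) * ∑ h ∈ Finset.range H, ∑ s,
        (∑ a, occ μ₁ P π h s a) * (∑ a, |π h s a - π' h s a|) := by
  have enn : ∀ k, 0 ≤ ∑ s, (∑ a, occ μ₁ P π k s a) * (∑ a, |π k s a - π' k s a|) := by
    intro k
    refine Finset.sum_nonneg fun s _ => mul_nonneg ?_ ?_
    · exact Finset.sum_nonneg fun a _ => occ_nonneg μ₁ hμ₁ P hP π hπ k s a
    · exact Finset.sum_nonneg fun a _ => abs_nonneg _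
  calc ∑ h ∈ Finset.range H, ∑ s, ∑ a, |occ μ₁ P π h s a - occ μ₁ P π' h s a|
      ≤ ∑ h ∈ Finset.range H, ∑ k ∈ Finset.range (h+1), ∑ s,
          (∑ a, occ μ₁ P π k s a) * (∑ a, |π k s a - π' k s a|) :=
        Finset.sum_le_sum fun h _ => delta_bound μ₁ hμ₁ P hP π π' hπ hπ' h
    _ ≤ ∑ _h ∈ Finset.range H, ∑ k ∈ Finset.range H, ∑ s,
          (∑ a, occ μ₁ P π k s a) * (∑ a, |π k s a - π' k s a|) := by
        refine Finset.sum_le_sum fun h hh => ?_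
        refine Finset.sum_le_sum_of_subset_of_nonneg ?_ fun k _ _ => enn k
        exact Finset.range_subset_range.mpr (Finset.mem_range.mp hh)
    _ = (H : ℝ) * ∑ h ∈ Finset.range H, ∑ s,
          (∑ a, occ μ₁ P π h s a) * (∑ a, |π h s a - π' h s a|) := by
        rw [Finset.sum_const, Finset.card_range, nsmul_eq_mul]
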